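/- Let R = GF(2)[c]/(c³) and S = R[[d]]. For ε ∈ GF(2) and every natural number i, the coefficient of c² in the d^i coefficient of (1 + c + d + ε·c²)·(1 + c + c² + d)^{-1} ∈ S equals 1 + ε. -/

import Mathlib

open Polynomial PowerSeries

noncomputable section

/-- The ring `R = GF(2)[c] / (c³)`. -/
abbrev R2 : Type := AdjoinRoot (Polynomial.X ^ 3 : Polynomial (ZMod 2))

/-- The class of the variable `c` in `R = GF(2)[c] / (c³)`. -/
def cR : R2 := AdjoinRoot.root _

/-- The power series ring `S = R[[d]]`. -/
abbrev S2 : Type := PowerSeries R2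

/-- The image of `c` in `S = R[[d]]`. -/
def cS : S2 := PowerSeries.C cR

/-- The variable `d` of `S = R[[d]]`. -/
def dS : S2 := PowerSeries.X

/-- The coefficient of `c²` of an element of `R = GF(2)[c] / (c³)`,
computed via the unique representative polynomial of degree `< 3`. -/
def coefc2 (x : R2) : ZMod 2 :=
  (AdjoinRoot.modByMonicHom (Polynomial.monic_X_pow 3) x).coeff 2

lemma h2R : (2 : R2) = 0 := by
  have h : ((2 : ZMod 2) : R2) = (2 : R2) := map_ofNat (algebraMap (ZMod 2) R2) 2
  rw [← h, show (2 : ZMod 2) = 0 by decide, map_zero]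

lemma h3R : cR ^ 3 = 0 := by
  have : (AdjoinRoot.mk (Polynomial.X ^ 3 : Polynomial (ZMod 2)))
      (Polynomial.X ^ 3) = 0 := AdjoinRoot.mk_self
  simpa [cR, map_pow] using this

lemma hsq (n : ℕ) : cR ^ 2 * (1 + cR) ^ n = cR ^ 2 := by
  induction n with
  | zero => simp
  | succ n ih => linear_combination (1 + cR) * ih + h3R

theorem coefc2_eval (ε : ZMod 2) (i : ℕ) :
    coefc2 (PowerSeries.coeff i
        ((1 + cS + dS + PowerSeries.C (ε • cR ^ 2)) *
          Ring.inverse (1 + cS + cS ^ 2 + dS))) = 1 + ε := by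
  set u : R2 := 1 + cR + cR ^ 2 with hu
  set B : S2 := PowerSeries.mk fun k => (1 + cR) ^ (k + 1) with hB
  have hA : (1 + cS + cS ^ 2 + dS) = PowerSeries.C u + PowerSeries.X := by
    simp [cS, dS, hu, map_add, map_pow, map_one]
  have huc : u * (1 + cR) = 1 := by
    rw [hu]; linear_combination h3R + (cR + cR ^ 2) * h2R
  have hAB : (1 + cS + cS ^ 2 + dS) * B = 1 := by
    rw [hA]
    ext n
    cases n with
    | zero =>
      simp [hB, add_mul, PowerSeries.coeff_zero_X_mul, huc]
    | succ n =>
      simp only [add_mul, map_add, PowerSeries.coeff_C_mul, PowerSeries.coeff_succ_X_mul, hB,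
        PowerSeries.coeff_mk, PowerSeries.coeff_one, Nat.succ_ne_zero, if_false]
      linear_combination ((1 + cR) ^ (n + 1)) * huc + ((1 + cR) ^ (n + 1)) * h2R
  have hBA : B * (1 + cS + cS ^ 2 + dS) = 1 := by rw [mul_comm]; exact hAB
  have hinv : Ring.inverse (1 + cS + cS ^ 2 + dS) = B := by
    have := Ring.inverse_unit ⟨(1 + cS + cS ^ 2 + dS), B, hAB, hBA⟩
    simpa using this
  have hN : (1 + cS + dS + PowerSeries.C (ε • cR ^ 2)) =
      (1 + cS + cS ^ 2 + dS) + PowerSeries.C ((1 + ε) • cR ^ 2) := by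
    have hc : cS ^ 2 = PowerSeries.C (cR ^ 2) := by simp [cS, map_pow]
    have key : cR ^ 2 + (1 + ε) • cR ^ 2 = ε • cR ^ 2 := by
      rw [add_smul, one_smul, ← add_assoc, ← two_mul, h2R, zero_mul, zero_add]
    rw [hc, ← key, map_add]
    ring
  rw [hinv, hN, add_mul, hAB]
  have hcoeff : (PowerSeries.coeff i) (1 + PowerSeries.C ((1 + ε) • cR ^ 2) * B) =
      (if i = 0 then 1 else 0) + (1 + ε) • cR ^ 2 := by
    rw [map_add, PowerSeries.coeff_C_mul, hB, PowerSeries.coeff_mk, smul_mul_assoc, hsq]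
    simp [PowerSeries.coeff_one]
  rw [hcoeff]
  have hadd : ∀ x y : R2, coefc2 (x + y) = coefc2 x + coefc2 y := fun x y => by
    simp [coefc2, map_add]
  have hsmul : ∀ (a : ZMod 2) (x : R2), coefc2 (a • x) = a * coefc2 x := fun a x => by
    simp [coefc2, map_smul]
  have h0 : coefc2 (0 : R2) = 0 := by simp [coefc2]
  have h1 : coefc2 (1 : R2) = 0 := by
    have h : (1 : R2) = AdjoinRoot.mk _ (1 : Polynomial (ZMod 2)) := (map_one _).symm
    rw [coefc2, h, AdjoinRoot.modByMonicHom_mk,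
      (Polynomial.modByMonic_eq_self_iff (monic_X_pow 3)).2 (by
        rw [Polynomial.degree_one, Polynomial.degree_X_pow]; decide)]
    simp [Polynomial.coeff_one]
  have hc2 : coefc2 (cR ^ 2) = 1 := by
    have h : (cR ^ 2 : R2) = AdjoinRoot.mk _ (Polynomial.X ^ 2 : Polynomial (ZMod 2)) := by
      rw [map_pow]; rfl
    rw [coefc2, h, AdjoinRoot.modByMonicHom_mk,
      (Polynomial.modByMonic_eq_self_iff (monic_X_pow 3)).2 (by
        rw [Polynomial.degree_X_pow, Polynomial.degree_X_pow]; decide)]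
    simp
  rcases Nat.eq_zero_or_pos i with h | h
  · rw [h, if_pos rfl, hadd, h1, hsmul, hc2]; ring
  · rw [if_neg h.ne', hadd, h0, hsmul, hc2]; ring

end
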